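/- arXiv:2407.18092 — 6 statements merged into one kernel-verified Lean document; each statement's English description precedes it below -/
import Mathlib

section
/- For every PB game (P,V,B,d) and every tie-breaking order ≻ on P, there exists a BasicAV-Nash equilibrium strategy profile in which the project that BasicAV considers first (i.e., the project with the largest approval score, with ties among most-approved projects broken by ≻) reports cost B. -/
open scoped Classical

set_option linter.unusedSectionVars false
set_option linter.unusedVariables false

noncomputable section

namespace PB

variable {P V : Type} [Fintype P] [DecidableEq P] [Fintype V] [DecidableEq V]

/-- The set of voters that approve project `p`. -/
def approvers (A : V → Finset P) (p : P) : Finset V :=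
  Finset.univ.filter fun v => p ∈ A v

/-- A key whose second lexicographic component is an embedding into `ℕ` is injective. -/
lemma lexKey_inj {γ : Type} (g : P → γ) (tb : P ↪ ℕ) :
    Function.Injective fun p : P => toLex ((g p, tb p) : γ × ℕ) := by
  intro a b h
  have h2 : ((g a, tb a) : γ × ℕ) = (g b, tb b) := congrArg (fun x => ofLex x) h
  exact tb.injective (congrArg Prod.snd h2)

/-- The list of all projects, sorted increasingly by an injective key. -/
def prioList {κ : Type} [LinearOrder κ] (key : P → κ) (hk : Function.Injective key) : List P :=
  letI : DecidableRel fun p q : P => key p ≤ key q :=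
    fun a b => inferInstanceAs (Decidable (key a ≤ key b))
  letI : IsTrans P fun p q => key p ≤ key q := ⟨fun _ _ _ h1 h2 => le_trans h1 h2⟩
  letI : Std.Antisymm fun p q : P => key p ≤ key q := ⟨fun _ _ h1 h2 => hk (le_antisymm h1 h2)⟩
  letI : Std.Total fun p q : P => key p ≤ key q := ⟨fun _ _ => le_total _ _⟩
  Finset.sort Finset.univ (fun p q => key p ≤ key q)

/-- Greedy selection of projects along a list: a project is added to the winning set
whenever its cost still fits into the remaining budget. -/
def greedy (cost : P → ℝ) : ℝ → List P → Finset P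
  | _, [] => ∅
  | budget, p :: rest =>
      if cost p ≤ budget then insert p (greedy cost (budget - cost p) rest)
      else greedy cost budget rest

/-- The priority key of the BasicAV rule: nonincreasing approval score,
ties broken by the tie-breaking order `tb` (smaller `tb` value = preferred). -/
def basicAVkey (A : V → Finset P) (tb : P ↪ ℕ) (p : P) : ℕᵒᵈ ×ₗ ℕ :=
  toLex (OrderDual.toDual (approvers A p).card, tb p)

/-- The BasicAV rule. -/
def basicAV (A : V → Finset P) (tb : P ↪ ℕ) (B : ℝ) (cost : P → ℝ) : Finset P :=
  greedy cost B (prioList (basicAVkey A tb) (lexKey_inj _ tb))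

/-- The priority key of the AV/Cost rule: nonincreasing approval-to-cost ratio
(computed in `ℝ≥0∞`, so that zero-cost projects come first),
ties broken by the tie-breaking order `tb`. -/
def avCostKey (A : V → Finset P) (tb : P ↪ ℕ) (cost : P → ℝ) (p : P) : ENNRealᵒᵈ ×ₗ ℕ :=
  toLex (OrderDual.toDual (((approvers A p).card : ENNReal) / ENNReal.ofReal (cost p)), tb p)

/-- The AV/Cost rule. -/
def avCost (A : V → Finset P) (tb : P ↪ ℕ) (B : ℝ) (cost : P → ℝ) : Finset P :=
  greedy cost B (prioList (avCostKey A tb cost) (lexKey_inj _ tb))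

/-- The element of a nonempty finite set minimizing an injective key. -/
def argminBy {κ : Type} [LinearOrder κ] (key : P → κ) (hk : Function.Injective key)
    (R : Finset P) (hR : R.Nonempty) : P :=
  letI : LinearOrder P := LinearOrder.lift' key hk
  R.min' hR

lemma argminBy_mem {κ : Type} [LinearOrder κ] (key : P → κ) (hk : Function.Injective key)
    (R : Finset P) (hR : R.Nonempty) : argminBy key hk R hR ∈ R := by
  letI : LinearOrder P := LinearOrder.lift' key hk
  exact Finset.min'_mem R hR

/-- The time at which the supporters of `p` (jointly earning one unit of money per
unit of time, currently holding the amounts given by `b`) will have collected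
`cost p` money, measured from the current moment. -/
def phragTau (A : V → Finset P) (cost : P → ℝ) (b : V → ℝ) (p : P) : ℝ :=
  (cost p - ∑ v ∈ approvers A p, b v) / ((approvers A p).card : ℝ)

/-- One pass of the Phragmén rule: repeatedly take the remaining project whose
purchase event comes first (ties broken by `tb`); advance all bank accounts to that
moment; if the project fits in the remaining budget it is bought (and its supporters'
accounts are reset), otherwise it is removed from consideration. -/
def phragmenAux (A : V → Finset P) (tb : P ↪ ℕ) (cost : P → ℝ) :
    Finset P → ℝ → (V → ℝ) → Finset P
  | R, budget, b =>
    if hR : R.Nonempty then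
      let p := argminBy (fun p => toLex ((phragTau A cost b p, tb p) : ℝ × ℕ))
        (lexKey_inj _ tb) R hR
      have hp : p ∈ R := argminBy_mem _ _ _ _
      have hcard : (R.erase p).card < R.card := Finset.card_erase_lt_of_mem hp
      if cost p ≤ budget then
        insert p (phragmenAux A tb cost (R.erase p) (budget - cost p)
          (fun v => if v ∈ approvers A p then 0 else b v + phragTau A cost b p))
      else
        phragmenAux A tb cost (R.erase p) budget (fun v => b v + phragTau A cost b p)
    else ∅
  termination_by R _ _ => R.card

/-- The Phragmén rule. -/
def phragmen (A : V → Finset P) (tb : P ↪ ℕ) (B : ℝ) (cost : P → ℝ) : Finset P :=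
  phragmenAux A tb cost Finset.univ B (fun _ => 0)

/-- The set of coefficients `α` for which project `p` is exactly affordable, where
`contrib bv α c` is the amount a voter currently holding `bv` contributes towards a
project of cost `c` under coefficient `α`. -/
def affordSet (A : V → Finset P) (contrib : ℝ → ℝ → ℝ → ℝ) (cost : P → ℝ)
    (b : V → ℝ) (p : P) : Set ℝ :=
  {α : ℝ | ∑ v ∈ approvers A p, contrib (b v) α (cost p) = cost p}

/-- One pass of the Method of Equal Shares, parametrized by the contribution
function `contrib`: repeatedly select, among the remaining affordable projects, the
one with the smallest affordability coefficient (ties broken by `tb`) and charge its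
supporters accordingly; stop when no remaining project is affordable. -/
def mesAux (A : V → Finset P) (tb : P ↪ ℕ) (contrib : ℝ → ℝ → ℝ → ℝ) (cost : P → ℝ) :
    Finset P → (V → ℝ) → Finset P
  | R, b =>
    let F := R.filter fun p => (affordSet A contrib cost b p).Nonempty
    if hF : F.Nonempty then
      let p := argminBy
        (fun p => toLex ((sInf (affordSet A contrib cost b p), tb p) : ℝ × ℕ))
        (lexKey_inj _ tb) F hF
      have hp : p ∈ R := Finset.mem_of_mem_filter p (argminBy_mem _ _ _ _)
      have hcard : (R.erase p).card < R.card := Finset.card_erase_lt_of_mem hp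
      insert p (mesAux A tb contrib cost (R.erase p)
        (fun v => if v ∈ approvers A p then
            b v - contrib (b v) (sInf (affordSet A contrib cost b p)) (cost p)
          else b v))
    else ∅
  termination_by R _ => R.card

/-- The Method of Equal Shares with cost utilities: a voter holding `bv` contributes
`min bv (α * c)` towards a project of cost `c`. -/
def mesCost (A : V → Finset P) (tb : P ↪ ℕ) (B : ℝ) (cost : P → ℝ) : Finset P :=
  mesAux A tb (fun bv α c => min bv (α * c)) cost Finset.univ
    (fun _ => B / (Fintype.card V : ℝ))

/-- The Method of Equal Shares with approval utilities: a voter holding `bv`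
contributes `min bv α`. -/
def mesApr (A : V → Finset P) (tb : P ↪ ℕ) (B : ℝ) (cost : P → ℝ) : Finset P :=
  mesAux A tb (fun bv α _ => min bv α) cost Finset.univ
    (fun _ => B / (Fintype.card V : ℝ))

/-- The payoff of project `p` in the cost game: `cost p - d p` if `p` is funded,
and `0` otherwise. -/
def payoff (d cost : P → ℝ) (W : Finset P) (p : P) : ℝ :=
  if p ∈ W then cost p - d p else 0

/-- `c` is a (pure) Nash equilibrium of the cost game with delivery costs `d` under
the PB rule `rule`: all reported costs are nonnegative and no project can strictly
increase its payoff by unilaterally reporting a different (nonnegative) cost. -/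
def isNE (rule : (P → ℝ) → Finset P) (d : P → ℝ) (c : P → ℝ) : Prop :=
  (∀ p, 0 ≤ c p) ∧
  ∀ (p : P) (x : ℝ), 0 ≤ x →
    payoff d (Function.update c p x) (rule (Function.update c p x)) p ≤
      payoff d c (rule c) p

/-- `tb` is an approval-to-delivery-cost (A/D) tie-breaking order: projects with zero
delivery cost come first, and among projects with positive delivery costs a strictly
larger approval-to-delivery-cost ratio means a strictly better position. -/
def isADOrder (A : V → Finset P) (d : P → ℝ) (tb : P ↪ ℕ) : Prop :=
  (∀ p q : P, d p = 0 → 0 < d q → tb p < tb q) ∧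
  (∀ p q : P, 0 < d p → 0 < d q →
    ((approvers A q).card : ℝ) / d q < ((approvers A p).card : ℝ) / d p → tb p < tb q)

/-- The approval-proportional strategy profile. -/
def apProfile (A : V → Finset P) (B : ℝ) (p : P) : ℝ :=
  B * (approvers A p).card / (∑ q : P, ((approvers A q).card : ℝ))

/-- Plurality preferences: every voter approves exactly one project. -/
def plurality (A : V → Finset P) : Prop := ∀ v, (A v).card = 1

/-- Party-list preferences: any two ballots are equal or disjoint. -/
def partyList (A : V → Finset P) : Prop := ∀ v w, A v = A w ∨ Disjoint (A v) (A w)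

/-- The party of a project: all projects approved by exactly the same voters. -/
def party (A : V → Finset P) (p : P) : Finset P :=
  Finset.univ.filter fun q => approvers A q = approvers A p

end PB

section Aux

variable {P : Type} [Fintype P] [DecidableEq P]

lemma greedy_empty_of (cost : P → ℝ) (budget : ℝ) (l : List P)
    (h : ∀ q ∈ l, ¬ cost q ≤ budget) : PB.greedy cost budget l = ∅ := by
  induction l with
  | nil => rfl
  | cons a t ih =>
    rw [PB.greedy, if_neg (h a (by simp))]
    exact ih fun q hq => h q (List.mem_cons_of_mem _ hq)

lemma greedy_cost_le (cost : P → ℝ) (hc : ∀ q, 0 ≤ cost q) :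
    ∀ (l : List P) (budget : ℝ) (p : P), p ∈ PB.greedy cost budget l → cost p ≤ budget := by
  intro l
  induction l with
  | nil => intro budget p hp; simp [PB.greedy] at hp
  | cons a t ih =>
    intro budget p hp
    rw [PB.greedy] at hp
    by_cases ha : cost a ≤ budget
    · rw [if_pos ha] at hp
      rcases Finset.mem_insert.mp hp with h | h
      · rw [h]; exact ha
      · have := ih _ _ h
        have := hc a
        linarith
    · rw [if_neg ha] at hp
      exact ih _ _ hp

lemma prioList_head {κ : Type} [LinearOrder κ]
    (key : P → κ) (hk : Function.Injective key) (p₀ : P)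
    (hp₀ : ∀ q, key p₀ ≤ key q) :
    ∃ t, PB.prioList key hk = p₀ :: t := by
  letI : DecidableRel fun p q : P => key p ≤ key q :=
    fun a b => inferInstanceAs (Decidable (key a ≤ key b))
  letI : IsTrans P fun p q => key p ≤ key q := ⟨fun _ _ _ h1 h2 => le_trans h1 h2⟩
  letI : Std.Antisymm fun p q : P => key p ≤ key q := ⟨fun _ _ h1 h2 => hk (le_antisymm h1 h2)⟩
  letI : Std.Total fun p q : P => key p ≤ key q := ⟨fun _ _ => le_total _ _⟩
  show ∃ t, Finset.sort Finset.univ (fun p q => key p ≤ key q) = p₀ :: t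
  have hmem : p₀ ∈ Finset.sort Finset.univ (fun p q : P => key p ≤ key q) := by
    rw [Finset.mem_sort]; exact Finset.mem_univ _
  have hsort := Finset.pairwise_sort (s := Finset.univ) (r := fun p q : P => key p ≤ key q)
  cases hls : Finset.sort Finset.univ (fun p q : P => key p ≤ key q) with
  | nil => rw [hls] at hmem; simp at hmem
  | cons a t =>
    refine ⟨t, ?_⟩
    rw [hls] at hmem hsort
    rw [List.pairwise_cons] at hsort
    rcases List.mem_cons.mp hmem with h | h
    · rw [← h]
    · have h1 : key a ≤ key p₀ := hsort.1 p₀ h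
      have : a = p₀ := hk (le_antisymm h1 (hp₀ a))
      rw [this]

end Aux

/-- For every PB game and every tie-breaking order there is a
BasicAV-Nash equilibrium in which the project considered first by BasicAV
(largest approval score, ties broken by the tie-breaking order, i.e., the project
with the minimal BasicAV priority key) reports cost `B`. -/
theorem basicAV_NE_exists_top_reports_budget
    {P V : Type} [Fintype P] [DecidableEq P] [Fintype V] [DecidableEq V]
    (A : V → Finset P) (tb : P ↪ ℕ) (B : ℝ) (d : P → ℝ)
    (hB : 0 < B) (hballots : ∀ v, (A v).Nonempty)
    (happr : ∀ p, (PB.approvers A p).Nonempty)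
    (hd0 : ∀ p, 0 ≤ d p) (hdB : ∀ p, d p ≤ B)
    (p₀ : P) (hp₀ : ∀ q, PB.basicAVkey A tb p₀ ≤ PB.basicAVkey A tb q) :
    ∃ c : P → ℝ, PB.isNE (PB.basicAV A tb B) d c ∧ c p₀ = B := by
  classical
  obtain ⟨t, hL⟩ := prioList_head (PB.basicAVkey A tb) (PB.lexKey_inj _ tb) p₀ hp₀
  set c : P → ℝ := fun _ => B with hc
  have hgc : PB.basicAV A tb B c = {p₀} := by
    rw [PB.basicAV, hL, PB.greedy, if_pos (le_refl B : c p₀ ≤ B)]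
    have h0 : PB.greedy c (B - c p₀) t = ∅ := by
      apply greedy_empty_of
      intro q hq
      show ¬ B ≤ B - B
      linarith
    rw [h0]
    rfl
  refine ⟨c, ⟨fun p => hB.le, ?_⟩, rfl⟩
  intro p x hx
  have hcur : PB.payoff d c (PB.basicAV A tb B c) p =
      if p = p₀ then B - d p₀ else 0 := by
    rw [hgc, PB.payoff]
    by_cases h : p = p₀ <;> simp [h, hc]
  set c' := Function.update c p x with hc'
  have hc'0 : ∀ q, 0 ≤ c' q := by
    intro q
    by_cases hq : q = p
    · rw [hq, hc', Function.update_self]; exact hx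
    · rw [hc', Function.update_of_ne hq]; exact hB.le
  by_cases hp : p = p₀
  · subst hp
    rw [hcur, if_pos rfl]
    rw [PB.payoff]
    split
    · next hmem =>
      have hxB : c' p ≤ B := by
        rw [PB.basicAV, hL] at hmem
        rw [PB.greedy] at hmem
        by_cases hfit : c' p ≤ B
        · exact hfit
        · rw [if_neg hfit] at hmem
          exact greedy_cost_le c' hc'0 t B p hmem
      have : c' p = x := Function.update_self p x c
      rw [this] at hxB
      linarith
    · have := hdB p; linarith
  · rw [hcur, if_neg hp]
    rw [PB.payoff]
    split
    · next hmem =>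
      have hcp0 : c' p₀ = B := Function.update_of_ne (by exact fun h => hp h.symm) x c
      rw [PB.basicAV, hL, PB.greedy, if_pos (by rw [hcp0] : c' p₀ ≤ B)] at hmem
      rcases Finset.mem_insert.mp hmem with h | h
      · exact absurd h hp
      · have hle : c' p ≤ B - c' p₀ := greedy_cost_le c' hc'0 t _ p h
        rw [hcp0] at hle
        have hxx : c' p = x := Function.update_self p x c
        have := hc'0 p
        have := hd0 p
        rw [hxx] at hle ⊢
        linarith
    · exact le_refl 0
end
end

section
/- Consider the PB game with two projects p_1, p_2 and ten voters with plurality ballots such that |A(p_1)| = |A(p_2)| = 5, budget B = 10, delivery costs d(p_1) = 0 and d(p_2) = 6, and tie-breaking order p_2 ≻ p_1. This game has no AV/Cost-Nash equilibrium. Moreover, under the reversed tie-breaking order p_1 ≻ p_2, the strategy profile with c(p_1) = c(p_2) = 6 is an AV/Cost-Nash equilibrium in which only p_1 is funded. -/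
open scoped Classical

set_option linter.unusedSectionVars false
set_option linter.unusedVariables false

noncomputable section

/-- The plurality profile of the example: voters `0,…,4` approve project `0`
(this is `p₁`), voters `5,…,9` approve project `1` (this is `p₂`). -/
def exA : Fin 10 → Finset (Fin 2) := fun v => if v.val < 5 then {0} else {1}

/-- Delivery costs: `d(p₁) = 0`, `d(p₂) = 6`. -/
def exD : Fin 2 → ℝ := fun i => if i = 0 then 0 else 6

/-- The tie-breaking order `p₂ ≻ p₁`. -/
def tb21 : Fin 2 ↪ ℕ := ⟨fun i => 1 - i.val, by decide⟩

/-- The tie-breaking order `p₁ ≻ p₂`. -/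
def tb12 : Fin 2 ↪ ℕ := ⟨fun i => i.val, by decide⟩


section Aux

lemma ennratio_lt {x y : ℝ} (hx : 0 ≤ x) :
    (5:ENNReal) / ENNReal.ofReal y < 5 / ENNReal.ofReal x ↔ x < y := by
  rw [div_eq_mul_inv, div_eq_mul_inv, ENNReal.mul_lt_mul_iff_right (by norm_num) (by norm_num),
    ENNReal.inv_lt_inv, ENNReal.ofReal_lt_ofReal_iff_of_nonneg hx]

lemma ennratio_eq {x y : ℝ} (hx : 0 ≤ x) (hy : 0 ≤ y) :
    (5:ENNReal) / ENNReal.ofReal x = 5 / ENNReal.ofReal y ↔ x = y := by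
  constructor
  · intro h
    by_contra hne
    rcases lt_or_gt_of_ne hne with h1 | h1
    · exact absurd h (ne_of_gt ((ennratio_lt hx).2 h1))
    · exact absurd h (ne_of_lt ((ennratio_lt hy).2 h1))
  · rintro rfl; rfl

lemma card_app0 : (PB.approvers exA 0).card = 5 := by
  rw [PB.approvers]
  rw [show (Finset.univ.filter fun v : Fin 10 => (0:Fin 2) ∈ exA v) = {0,1,2,3,4} by
    ext v; fin_cases v <;> simp [exA] <;> decide]
  rfl

lemma card_app1 : (PB.approvers exA 1).card = 5 := by
  rw [PB.approvers]
  rw [show (Finset.univ.filter fun v : Fin 10 => (1:Fin 2) ∈ exA v) = {5,6,7,8,9} by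
    ext v; fin_cases v <;> simp [exA] <;> decide]
  rfl

lemma fin2_list (l : List (Fin 2)) (hlen : l.length = 2) (hnd : l.Nodup) :
    l = [0,1] ∨ l = [1,0] := by
  match l, hlen with
  | [a, b], _ =>
    fin_cases a <;> fin_cases b <;> simp_all

lemma prioList_fin2 {κ : Type} [LinearOrder κ] (key : Fin 2 → κ) (hk : Function.Injective key) :
    PB.prioList key hk = if key 0 ≤ key 1 then [0,1] else [1,0] := by
  letI : DecidableRel fun p q : Fin 2 => key p ≤ key q :=
    fun a b => inferInstanceAs (Decidable (key a ≤ key b))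
  letI : IsTrans (Fin 2) fun p q => key p ≤ key q := ⟨fun _ _ _ h1 h2 => le_trans h1 h2⟩
  letI : Std.Antisymm fun p q : Fin 2 => key p ≤ key q := ⟨fun _ _ h1 h2 => hk (le_antisymm h1 h2)⟩
  letI : Std.Total fun p q : Fin 2 => key p ≤ key q := ⟨fun _ _ => le_total _ _⟩
  have hlen : (PB.prioList key hk).length = 2 := by
    rw [PB.prioList, Finset.length_sort]; simp
  have hnd : (PB.prioList key hk).Nodup := by
    rw [PB.prioList]; exact Finset.sort_nodup _ _
  have hsorted : (PB.prioList key hk).Pairwise (fun p q => key p ≤ key q) := by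
    rw [PB.prioList]; exact Finset.pairwise_sort _ _
  rcases fin2_list _ hlen hnd with h | h <;> rw [h] <;> rw [h] at hsorted <;>
    simp [List.pairwise_cons] at hsorted
  · rw [if_pos hsorted]
  · rw [if_neg]
    intro hle
    exact absurd (hk (le_antisymm hle hsorted)) (by decide)

lemma keyle (tb : Fin 2 ↪ ℕ) (c : Fin 2 → ℝ) (h0 : 0 ≤ c 0) (h1 : 0 ≤ c 1) :
    PB.avCostKey exA tb c 0 ≤ PB.avCostKey exA tb c 1 ↔
      (c 0 < c 1 ∨ (c 0 = c 1 ∧ tb 0 ≤ tb 1)) := by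
  rw [PB.avCostKey, PB.avCostKey, Prod.Lex.le_iff]
  simp only [card_app0, card_app1]
  constructor
  · rintro (h | ⟨h, h2⟩)
    · left
      simp only [ofLex_toLex, OrderDual.toDual_lt_toDual] at h
      exact (ennratio_lt h0).1 h
    · right
      have h' := OrderDual.toDual.injective h
      exact ⟨(ennratio_eq h0 h1).1 h', h2⟩
  · rintro (h | ⟨h, h2⟩)
    · left
      simp only [ofLex_toLex, OrderDual.toDual_lt_toDual]
      exact (ennratio_lt h0).2 h
    · right
      exact ⟨congrArg OrderDual.toDual ((ennratio_eq h0 h1).2 h), h2⟩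

lemma avCost_fin2 (tb : Fin 2 ↪ ℕ) (c : Fin 2 → ℝ) (h0 : 0 ≤ c 0) (h1 : 0 ≤ c 1) :
    PB.avCost exA tb 10 c =
      if c 0 < c 1 ∨ (c 0 = c 1 ∧ tb 0 ≤ tb 1) then
        (if c 0 ≤ 10 then insert 0 (if c 1 ≤ 10 - c 0 then {1} else ∅)
         else if c 1 ≤ 10 then {1} else ∅)
      else
        (if c 1 ≤ 10 then insert 1 (if c 0 ≤ 10 - c 1 then {0} else ∅)
         else if c 0 ≤ 10 then {0} else ∅) := by
  have hinj : Function.Injective (PB.avCostKey exA tb c) := PB.lexKey_inj _ tb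
  show PB.greedy c 10 (PB.prioList (PB.avCostKey exA tb c) hinj) = _
  rw [prioList_fin2]
  by_cases hcond : c 0 < c 1 ∨ (c 0 = c 1 ∧ tb 0 ≤ tb 1)
  · rw [if_pos ((keyle tb c h0 h1).2 hcond), if_pos hcond]
    simp [PB.greedy]
  · rw [if_neg (fun h => hcond ((keyle tb c h0 h1).1 h)), if_neg hcond]
    simp [PB.greedy]

end Aux

/-- With budget `10`, plurality ballots with `|A(p₁)| = |A(p₂)| = 5`,
delivery costs `d(p₁) = 0`, `d(p₂) = 6` and tie-breaking `p₂ ≻ p₁`, the game has no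
AV/Cost-Nash equilibrium; under the reversed tie-breaking `p₁ ≻ p₂` the profile
`c ≡ 6` is an AV/Cost-Nash equilibrium in which only `p₁` is funded. -/
theorem avCost_no_NE_example :
    (¬ ∃ c : Fin 2 → ℝ, PB.isNE (PB.avCost exA tb21 10) exD c) ∧
    PB.isNE (PB.avCost exA tb12 10) exD (fun _ => 6) ∧
    PB.avCost exA tb12 10 (fun _ => 6) = {0} := by
  have e01 : ((0:Fin 2) = 1) ↔ False := by decide
  have e10 : ((1:Fin 2) = 0) ↔ False := by decide
  have etb21 : ((tb21 0 : ℕ) ≤ tb21 1) ↔ False := by decide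
  have etb12 : ((tb12 0 : ℕ) ≤ tb12 1) ↔ True := by decide
  have h3 : PB.avCost exA tb12 10 (fun _ => 6) = {0} := by
    rw [avCost_fin2 tb12 _ (by norm_num) (by norm_num)]
    rw [if_pos (Or.inr ⟨rfl, by decide⟩)]
    rw [if_pos (by norm_num), if_neg (by norm_num)]
    simp
  refine ⟨?_, ⟨fun p => by norm_num, ?_⟩, h3⟩
  · -- no NE with tb21
    rintro ⟨c, hpos, hne⟩
    have h0 := hpos 0
    have h1 := hpos 1
    have hW : PB.avCost exA tb21 10 c =
        if c 0 < c 1 then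
          (if c 0 ≤ 10 then insert 0 (if c 1 ≤ 10 - c 0 then {1} else ∅)
           else if c 1 ≤ 10 then {1} else ∅)
        else
          (if c 1 ≤ 10 then insert 1 (if c 0 ≤ 10 - c 1 then {0} else ∅)
           else if c 0 ≤ 10 then {0} else ∅) := by
      rw [avCost_fin2 tb21 c h0 h1]
      simp only [etb21, and_false, or_false]
    set W := PB.avCost exA tb21 10 c with hWdef
    -- deviation of project 0 to any x < c 1 with x ≤ 10 yields payoff x
    have dev0 : ∀ x : ℝ, 0 ≤ x → x < c 1 → x ≤ 10 → x ≤ PB.payoff exD c W 0 := by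
      intro x hx hxc hx10
      have hd := hne 0 x hx
      rw [avCost_fin2 tb21 _ (by simp only [Function.update_apply, if_pos rfl]; exact hx)
        (by simp only [Function.update_apply, e10, if_false]; exact h1)] at hd
      simp only [Function.update_apply, e01, e10, etb21, if_true, if_false, eq_self_iff_true,
        and_false, or_false] at hd
      rw [if_pos hxc, if_pos hx10] at hd
      simpa [PB.payoff, exD] using hd
    have hP0 : 0 ≤ PB.payoff exD c W 0 := by
      rw [PB.payoff]
      split_ifs
      · simpa [exD] using h0
      · exact le_rfl
    have hmem0 : (0:ℝ) < PB.payoff exD c W 0 → 0 ∈ W ∧ PB.payoff exD c W 0 = c 0 := by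
      intro h
      by_cases hm : (0:Fin 2) ∈ W
      · exact ⟨hm, by simp [PB.payoff, hm, exD]⟩
      · simp [PB.payoff, hm] at h
    by_cases hA : 10 < c 1
    · -- case c 1 > 10
      have h10 := dev0 10 (by norm_num) hA le_rfl
      obtain ⟨hm, hPe⟩ := hmem0 (by linarith)
      have hc : c 0 = 10 ∧ c 0 < c 1 := by
        rw [hW] at hm
        by_cases hcc : c 0 < c 1
        · rw [if_pos hcc] at hm
          by_cases hc10 : c 0 ≤ 10
          · exact ⟨le_antisymm hc10 (by linarith), hcc⟩
          · rw [if_neg hc10] at hm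
            split_ifs at hm <;> simp [e01] at hm
        · rw [if_neg hcc, if_neg (by linarith)] at hm
          split_ifs at hm with h'
          · push_neg at hcc; linarith
          · simp at hm
      obtain ⟨hc0, hcc⟩ := hc
      have hW' : W = {0} := by
        rw [hW, if_pos hcc, if_pos (by linarith), if_neg (by linarith)]
        simp
      have hd := hne 1 10 (by norm_num)
      rw [avCost_fin2 tb21 _ (by simp only [Function.update_apply, e01, if_false]; exact h0)
        (by simp only [Function.update_apply, if_pos rfl]; norm_num)] at hd
      simp only [Function.update_apply, e01, e10, etb21, if_true, if_false, eq_self_iff_true,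
        and_false, or_false] at hd
      rw [if_neg (by rw [hc0]; exact lt_irrefl 10), if_pos (by norm_num),
        if_neg (by rw [hc0]; norm_num)] at hd
      rw [hW'] at hd
      simp [PB.payoff, exD, e10, Function.update_apply] at hd
      linarith
    · push_neg at hA
      by_cases hB : c 1 ≤ 5
      · -- case c 1 ≤ 5
        have hdev : 10 - c 1 ≤ PB.payoff exD c W 0 := by
          have hd := hne 0 (10 - c 1) (by linarith)
          rw [avCost_fin2 tb21 _ (by simp [Function.update_apply]; linarith)
            (by simp only [Function.update_apply, e10, if_false]; exact h1)] at hd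
          simp only [Function.update_apply, e01, e10, etb21, if_true, if_false, eq_self_iff_true,
            and_false, or_false] at hd
          rw [if_neg (by push_neg; linarith), if_pos hA, if_pos le_rfl] at hd
          simpa [PB.payoff, exD] using hd
        obtain ⟨hm, hPe⟩ := hmem0 (by linarith)
        have hc0ge : 10 - c 1 ≤ c 0 := by linarith [hPe ▸ hdev]
        have hcc : ¬ c 0 < c 1 := by intro h; linarith
        rw [hW, if_neg hcc, if_pos hA] at hm
        have hc0le : c 0 ≤ 10 - c 1 := by
          by_contra hcon
          rw [if_neg hcon] at hm
          simp [e01] at hm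
        have hmem1 : (1:Fin 2) ∈ W := by
          rw [hW, if_neg hcc, if_pos hA]
          exact Finset.mem_insert_self _ _
        have hP1 : PB.payoff exD c W 1 = c 1 - 6 := by
          simp [PB.payoff, hmem1, exD, e10]
        have hd := hne 1 11 (by norm_num)
        rw [avCost_fin2 tb21 _ (by simp only [Function.update_apply, e01, if_false]; exact h0)
          (by simp only [Function.update_apply, if_pos rfl]; norm_num)] at hd
        simp only [Function.update_apply, e01, e10, etb21, if_true, if_false, eq_self_iff_true,
          and_false, or_false] at hd
        rw [if_pos (by linarith), if_pos (by linarith), if_neg (by linarith)] at hd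
        rw [hP1] at hd
        have hz : PB.payoff exD (Function.update c 1 11) (insert 0 ∅) 1 = 0 := by
          simp [PB.payoff, e10]
        rw [hz] at hd
        linarith
      · -- case 5 < c 1 ≤ 10
        push_neg at hB
        have hge : c 1 ≤ PB.payoff exD c W 0 := by
          by_contra hlt
          push_neg at hlt
          have hx := dev0 ((PB.payoff exD c W 0 + c 1) / 2) (by linarith) (by linarith)
            (by linarith)
          linarith
        obtain ⟨hm, hPe⟩ := hmem0 (by linarith)
        have hcc : ¬ c 0 < c 1 := by rw [hPe] at hge; intro h; linarith
        rw [hW, if_neg hcc, if_pos hA] at hm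
        by_cases hin : c 0 ≤ 10 - c 1
        · rw [hPe] at hge; linarith
        · rw [if_neg hin] at hm
          simp [e01] at hm
  · -- NE with tb12
    intro p x hx
    rw [h3]
    fin_cases p
    · show PB.payoff exD (Function.update (fun _ => (6:ℝ)) 0 x)
          (PB.avCost exA tb12 10 (Function.update (fun _ => (6:ℝ)) 0 x)) 0 ≤
        PB.payoff exD (fun _ => (6:ℝ)) {0} 0
      have hrhs : PB.payoff exD (fun _ => (6:ℝ)) {0} 0 = 6 := by simp [PB.payoff, exD]
      rw [hrhs]
      rw [avCost_fin2 tb12 _ (by simp only [Function.update_apply, if_pos rfl]; exact hx)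
        (by simp only [Function.update_apply, e10, if_false]; norm_num)]
      simp only [Function.update_apply, e01, e10, etb12, if_true, if_false, eq_self_iff_true,
        and_true, or_false] at *
      by_cases hx6 : x ≤ 6
      · rw [if_pos (by rcases lt_or_eq_of_le hx6 with h | h
                       · exact Or.inl h
                       · exact Or.inr h)]
        rw [if_pos (by linarith)]
        simp [PB.payoff, exD]
        linarith
      · rw [if_neg (by push_neg; exact ⟨by linarith, by linarith⟩)]
        rw [if_pos (by norm_num), if_neg (by linarith)]
        simp [PB.payoff]
    · show PB.payoff exD (Function.update (fun _ => (6:ℝ)) 1 x)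
          (PB.avCost exA tb12 10 (Function.update (fun _ => (6:ℝ)) 1 x)) 1 ≤
        PB.payoff exD (fun _ => (6:ℝ)) {0} 1
      have hrhs : PB.payoff exD (fun _ => (6:ℝ)) {0} 1 = 0 := by simp [PB.payoff, exD]
      rw [hrhs]
      rw [avCost_fin2 tb12 _ (by simp only [Function.update_apply, e01, if_false]; norm_num)
        (by simp only [Function.update_apply, if_pos rfl]; exact hx)]
      simp only [Function.update_apply, e01, e10, etb12, if_true, if_false, eq_self_iff_true,
        and_true, or_false] at *
      by_cases hx6 : 6 ≤ x
      · rw [if_pos (by rcases lt_or_eq_of_le hx6 with h | h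
                       · exact Or.inl h
                       · exact Or.inr h)]
        rw [if_pos (by norm_num), if_neg (by linarith)]
        simp [PB.payoff]
      · rw [if_neg (by push_neg; exact ⟨by linarith, fun h => by linarith⟩)]
        rw [if_pos (by linarith)]
        simp [PB.payoff, exD]
        linarith
end
end

section
/- For every integer γ > 1 there exists a PB game with plurality ballots, a tie-breaking order, and an AV/Cost-Nash equilibrium strategy profile c such that the total cost of the projects funded by AV/Cost in the instance (P,V,B,c) is at most B/γ. -/
open scoped Classical

set_option linter.unusedSectionVars false
set_option linter.unusedVariables false

noncomputable section

lemma aux_mem_greedy_le {P : Type} [Fintype P] [DecidableEq P] (cost : P → ℝ)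
    (hc : ∀ p, 0 ≤ cost p) :
    ∀ (l : List P) (budget : ℝ) (p : P), p ∈ PB.greedy cost budget l → cost p ≤ budget := by
  intro l
  induction l with
  | nil => intro budget p hp; simp [PB.greedy] at hp
  | cons q rest ih =>
    intro budget p hp
    rw [PB.greedy] at hp
    split_ifs at hp with h
    · rcases Finset.mem_insert.1 hp with rfl | hp
      · exact h
      · exact le_trans (ih _ _ hp) (by linarith [hc q])
    · exact ih _ _ hp

lemma aux_prioList_fin2 {κ : Type} [LinearOrder κ] (key : Fin 2 → κ)
    (hk : Function.Injective key) :
    PB.prioList key hk = if key 0 ≤ key 1 then [0, 1] else [1, 0] := by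
  letI : DecidableRel fun p q : Fin 2 => key p ≤ key q :=
    fun a b => inferInstanceAs (Decidable (key a ≤ key b))
  letI : IsTrans (Fin 2) fun p q => key p ≤ key q := ⟨fun _ _ _ h1 h2 => le_trans h1 h2⟩
  letI : Std.Antisymm fun p q : Fin 2 => key p ≤ key q := ⟨fun _ _ h1 h2 => hk (le_antisymm h1 h2)⟩
  letI : Std.Total fun p q : Fin 2 => key p ≤ key q := ⟨fun _ _ => le_total _ _⟩
  have heq : PB.prioList key hk = Finset.sort Finset.univ (fun p q => key p ≤ key q) := rfl
  rw [heq]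
  have hlen : (Finset.sort Finset.univ (fun p q : Fin 2 => key p ≤ key q)).length = 2 := by
    rw [Finset.length_sort]; simp
  obtain ⟨a, b, hab⟩ := List.length_eq_two.1 hlen
  have hnd := Finset.sort_nodup Finset.univ (fun p q : Fin 2 => key p ≤ key q)
  have hsort := Finset.pairwise_sort Finset.univ (fun p q : Fin 2 => key p ≤ key q)
  rw [hab] at hnd hsort ⊢
  have hne : a ≠ b := by simpa [List.nodup_cons] using hnd
  have hle : key a ≤ key b := by
    have := (List.pairwise_cons.1 hsort).1 b (by simp)
    exact this
  have h2 : ∀ x : Fin 2, x = 0 ∨ x = 1 := by decide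
  rcases h2 a with rfl | rfl <;> rcases h2 b with rfl | rfl
  · exact absurd rfl hne
  · rw [if_pos hle]
  · rw [if_neg]
    intro hc2
    exact hne (hk (le_antisymm hle hc2))
  · exact absurd rfl hne

/-- For every integer `γ > 1` there is a PB game with plurality
ballots, a tie-breaking order and an AV/Cost-Nash equilibrium `c` such that the
total cost of the projects funded by AV/Cost under `c` is at most `B / γ`. -/
theorem avCost_NE_arbitrarily_small_spending (γ : ℕ) (hγ : 1 < γ) :
    ∃ (m n : ℕ) (A : Fin n → Finset (Fin m)) (tb : Fin m ↪ ℕ) (B : ℝ)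
      (d c : Fin m → ℝ),
      0 < B ∧ (∀ v, (A v).card = 1) ∧ (∀ p, (PB.approvers A p).Nonempty) ∧
      (∀ p, 0 ≤ d p) ∧ (∀ p, d p ≤ B) ∧
      PB.isNE (PB.avCost A tb B) d c ∧
      (∑ p ∈ PB.avCost A tb B c, c p) ≤ B / γ := by
  have hγR : (1:ℝ) < (γ:ℝ) := by exact_mod_cast hγ
  have hfin2 : ∀ q : Fin 2, q = 0 ∨ q = 1 := by decide
  set A : Fin (γ+1) → Finset (Fin 2) := fun v => if v = 0 then {0} else {1} with hA
  set tb : Fin 2 ↪ ℕ := ⟨Fin.val, Fin.val_injective⟩ with htb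
  set c : Fin 2 → ℝ := fun p => if p = 0 then 1 else (γ:ℝ) with hc
  set d : Fin 2 → ℝ := fun p => if p = 0 then 0 else (γ:ℝ) with hd
  have hc0 : c 0 = 1 := by simp [hc]
  have hc1 : c 1 = (γ:ℝ) := by simp [hc]
  have hd0 : d 0 = 0 := by simp [hd]
  have hd1 : d 1 = (γ:ℝ) := by simp [hd]
  -- approvers
  have happ0 : PB.approvers A 0 = {0} := by
    ext v
    simp only [PB.approvers, Finset.mem_filter, Finset.mem_univ, true_and, hA,
      Finset.mem_singleton]
    by_cases h : v = 0 <;> simp [h]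
  have happ1 : PB.approvers A 1 = Finset.univ.erase 0 := by
    ext v
    simp only [PB.approvers, Finset.mem_filter, Finset.mem_univ, true_and, hA,
      Finset.mem_erase, Finset.mem_singleton]
    by_cases h : v = 0 <;> simp [h]
  have hcard0 : (PB.approvers A 0).card = 1 := by rw [happ0]; simp
  have hcard1 : (PB.approvers A 1).card = γ := by
    rw [happ1, Finset.card_erase_of_mem (Finset.mem_univ 0)]
    simp
  -- key comparison
  have keyle : ∀ cost : Fin 2 → ℝ,
      (PB.avCostKey A tb cost 0 ≤ PB.avCostKey A tb cost 1 ↔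
        (γ : ENNReal) / ENNReal.ofReal (cost 1) ≤ 1 / ENNReal.ofReal (cost 0)) := by
    intro cost
    rw [PB.avCostKey, PB.avCostKey, Prod.Lex.le_iff]
    simp only [hcard0, hcard1, htb, Function.Embedding.coeFn_mk, Fin.val_zero, Fin.val_one,
      OrderDual.toDual_lt_toDual, OrderDual.toDual_inj, Nat.cast_one]
    constructor
    · rintro (h | ⟨h, -⟩)
      · exact h.le
      · exact le_of_eq h.symm
    · intro h
      rcases h.lt_or_eq with h' | h'
      · exact Or.inl h'
      · exact Or.inr ⟨h'.symm, by norm_num⟩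
  have havCost : ∀ cost : Fin 2 → ℝ,
      PB.avCost A tb (γ:ℝ) cost =
        if (γ : ENNReal) / ENNReal.ofReal (cost 1) ≤ 1 / ENNReal.ofReal (cost 0)
        then PB.greedy cost (γ:ℝ) [0, 1] else PB.greedy cost (γ:ℝ) [1, 0] := by
    intro cost
    rw [PB.avCost]
    erw [aux_prioList_fin2]
    by_cases h : (γ : ENNReal) / ENNReal.ofReal (cost 1) ≤ 1 / ENNReal.ofReal (cost 0)
    · rw [if_pos h, if_pos ((keyle cost).2 h)]
    · rw [if_neg h, if_neg (fun hx => h ((keyle cost).1 hx))]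
  -- equilibrium outcome
  have hWeq : PB.avCost A tb (γ:ℝ) c = {0} := by
    rw [havCost c]
    rw [if_pos]
    · rw [PB.greedy]
      rw [if_pos (by rw [hc0]; linarith)]
      rw [PB.greedy]
      rw [if_neg (by rw [hc1, hc0]; linarith)]
      rw [PB.greedy]
      simp
    · rw [hc0, hc1, ENNReal.ofReal_one, ENNReal.ofReal_natCast]
      rw [ENNReal.div_self (Nat.cast_ne_zero.2 (by omega)) (ENNReal.natCast_ne_top γ)]
      simp
  refine ⟨2, γ + 1, A, tb, (γ:ℝ), d, c, by linarith, ?_, ?_, ?_, ?_, ?_, ?_⟩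
  · intro v
    by_cases h : v = 0 <;> simp [hA, h]
  · intro p
    rcases hfin2 p with rfl | rfl
    · exact ⟨0, by rw [happ0]; simp⟩
    · refine ⟨⟨1, by omega⟩, ?_⟩
      have h10 : (⟨1, by omega⟩ : Fin (γ+1)) ≠ 0 := by simp [Fin.ext_iff]
      simp only [happ1]
      exact Finset.mem_erase.2 ⟨h10, Finset.mem_univ _⟩
  · intro p; rcases hfin2 p with rfl | rfl
    · rw [hd0]
    · rw [hd1]; positivity
  · intro p; rcases hfin2 p with rfl | rfl
    · rw [hd0]; linarith
    · rw [hd1]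
  · constructor
    · intro p; rcases hfin2 p with rfl | rfl
      · rw [hc0]; linarith
      · rw [hc1]; linarith
    · intro p x hx
      rcases hfin2 p with rfl | rfl
      · -- project 0 deviates to x
        have hrhs : PB.payoff d c (PB.avCost A tb (γ:ℝ) c) 0 = 1 := by
          rw [hWeq, PB.payoff, if_pos (Finset.mem_singleton_self 0), hc0, hd0]; ring
        rw [hrhs]
        set c' := Function.update c (0 : Fin 2) x with hc'
        have hc'0 : c' 0 = x := Function.update_self _ _ _
        have hc'1 : c' 1 = (γ:ℝ) := by
          rw [hc', Function.update_of_ne (by decide), hc1]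
        by_cases hx1 : x ≤ 1
        · rw [PB.payoff]
          split_ifs with hmem
          · rw [hc'0, hd0]; linarith
          · linarith
        · -- x > 1 : project 0 is not funded
          have hW' : PB.avCost A tb (γ:ℝ) c' = {1} := by
            rw [havCost c']
            rw [if_neg]
            · rw [PB.greedy]
              rw [if_pos (le_of_eq hc'1)]
              rw [PB.greedy]
              rw [if_neg (by rw [hc'0, not_le]; linarith [lt_of_not_ge hx1])]
              rw [PB.greedy]
              simp
            · rw [hc'0, hc'1, ENNReal.ofReal_natCast]
              rw [ENNReal.div_self (Nat.cast_ne_zero.2 (by omega)) (ENNReal.natCast_ne_top γ)]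
              intro hcon
              have h1x : (1:ENNReal) / ENNReal.ofReal x < 1 := by
                rw [ENNReal.div_lt_iff (Or.inl (by simp; linarith)) (Or.inl ENNReal.ofReal_ne_top)]
                rw [one_mul]
                exact ENNReal.one_lt_ofReal.2 (lt_of_not_ge hx1)
              exact absurd (lt_of_le_of_lt hcon h1x) (lt_irrefl 1)
          rw [hW', PB.payoff, if_neg (by decide)]
          linarith
      · -- project 1 deviates to x
        have hrhs : PB.payoff d c (PB.avCost A tb (γ:ℝ) c) 1 = 0 := by
          rw [hWeq, PB.payoff, if_neg (by decide)]
        rw [hrhs]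
        set c' := Function.update c (1 : Fin 2) x with hc'
        have hc'0 : c' 0 = 1 := by
          rw [hc', Function.update_of_ne (by decide), hc0]
        have hc'1 : c' 1 = x := Function.update_self _ _ _
        have hnn : ∀ q : Fin 2, 0 ≤ c' q := by
          intro q; rcases hfin2 q with rfl | rfl
          · rw [hc'0]; linarith
          · rw [hc'1]; exact hx
        rw [PB.payoff]
        split_ifs with hmem
        · have hxle : c' 1 ≤ (γ:ℝ) := by
            rw [PB.avCost] at hmem
            exact aux_mem_greedy_le c' hnn _ _ 1 hmem
          rw [hc'1] at hxle
          rw [hc'1, hd1]; linarith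
        · exact le_refl 0
  · rw [hWeq]
    rw [Finset.sum_singleton, hc0]
    rw [div_self (by linarith : (γ:ℝ) ≠ 0)]
end
end

section
/- For every PB instance with plurality ballots and any fixed tie-breaking order ≻, the AV/Cost rule and the Phragmén rule output the same set of funded projects. -/
open scoped Classical

set_option linter.unusedSectionVars false
set_option linter.unusedVariables false

noncomputable section

namespace PB

section Aux

variable {P V : Type} [Fintype P] [DecidableEq P] [Fintype V] [DecidableEq V]

lemma argminBy_le {κ : Type} [LinearOrder κ] (key : P → κ) (hk : Function.Injective key)
    (R : Finset P) (hR : R.Nonempty) {y : P} (hy : y ∈ R) :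
    key (argminBy key hk R hR) ≤ key y := by
  letI : LinearOrder P := LinearOrder.lift' key hk
  exact Finset.min'_le R y hy

lemma argminBy_eq {κ : Type} [LinearOrder κ] (key : P → κ) (hk : Function.Injective key)
    (R : Finset P) (hR : R.Nonempty) {x : P} (hx : x ∈ R)
    (hmin : ∀ y ∈ R, key x ≤ key y) : argminBy key hk R hR = x :=
  hk (le_antisymm (argminBy_le key hk R hR hx) (hmin _ (argminBy_mem key hk R hR)))

lemma argminBy_congr {κ₁ κ₂ : Type} [LinearOrder κ₁] [LinearOrder κ₂]
    (k₁ : P → κ₁) (k₂ : P → κ₂) (h₁ : Function.Injective k₁) (h₂ : Function.Injective k₂)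
    (R : Finset P) (hR : R.Nonempty)
    (hagree : ∀ p ∈ R, ∀ q ∈ R, k₁ p ≤ k₁ q ↔ k₂ p ≤ k₂ q) :
    argminBy k₁ h₁ R hR = argminBy k₂ h₂ R hR := by
  apply argminBy_eq k₁ h₁ R hR (argminBy_mem k₂ h₂ R hR)
  intro y hy
  exact (hagree _ (argminBy_mem k₂ h₂ R hR) _ hy).mpr (argminBy_le k₂ h₂ R hR hy)

/-- Greedy on a finset: repeatedly take the key-minimal remaining project. -/
def greedyF {κ : Type} [LinearOrder κ] (cost : P → ℝ) (key : P → κ)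
    (hk : Function.Injective key) : Finset P → ℝ → Finset P
  | R, budget =>
    if hR : R.Nonempty then
      let p := argminBy key hk R hR
      have hp : p ∈ R := argminBy_mem _ _ _ _
      have : (R.erase p).card < R.card := Finset.card_erase_lt_of_mem hp
      if cost p ≤ budget then insert p (greedyF cost key hk (R.erase p) (budget - cost p))
      else greedyF cost key hk (R.erase p) budget
    else ∅
  termination_by R _ => R.card

lemma greedyF_congr {κ₁ κ₂ : Type} [LinearOrder κ₁] [LinearOrder κ₂]
    (cost : P → ℝ) (k₁ : P → κ₁) (k₂ : P → κ₂)
    (h₁ : Function.Injective k₁) (h₂ : Function.Injective k₂)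
    (hagree : ∀ p q, k₁ p ≤ k₁ q ↔ k₂ p ≤ k₂ q) (R : Finset P) :
    ∀ budget, greedyF cost k₁ h₁ R budget = greedyF cost k₂ h₂ R budget := by
  induction R using Finset.strongInduction with
  | _ R ih =>
    intro budget
    rw [greedyF, greedyF]
    by_cases hR : R.Nonempty
    · rw [dif_pos hR, dif_pos hR]
      have hp : argminBy k₁ h₁ R hR = argminBy k₂ h₂ R hR :=
        argminBy_congr k₁ k₂ h₁ h₂ R hR (fun p _ q _ => hagree p q)
      simp only [← hp]
      have hmem := argminBy_mem k₁ h₁ R hR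
      by_cases hb : cost (argminBy k₁ h₁ R hR) ≤ budget
      · rw [if_pos hb, if_pos hb, ih _ (Finset.erase_ssubset hmem)]
      · rw [if_neg hb, if_neg hb, ih _ (Finset.erase_ssubset hmem)]
    · rw [dif_neg hR, dif_neg hR]

lemma greedy_eq_greedyF {κ : Type} [LinearOrder κ] (cost : P → ℝ) (key : P → κ)
    (hk : Function.Injective key) :
    ∀ (l : List P), l.Nodup → l.Pairwise (fun p q => key p ≤ key q) →
      ∀ budget, greedy cost budget l = greedyF cost key hk l.toFinset budget := by
  intro l
  induction l with
  | nil =>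
    intro _ _ budget
    rw [greedy, greedyF]
    simp
  | cons p rest ih =>
    intro hnd hs budget
    obtain ⟨hple, hrest⟩ := List.pairwise_cons.mp hs
    obtain ⟨hpnotin, hndrest⟩ := List.nodup_cons.mp hnd
    have hpmem : p ∈ (p :: rest).toFinset := by simp
    have hne : (p :: rest).toFinset.Nonempty := ⟨p, hpmem⟩
    have hargmin : argminBy key hk (p :: rest).toFinset hne = p := by
      apply argminBy_eq key hk _ hne hpmem
      intro y hy
      rcases List.mem_cons.mp (List.mem_toFinset.mp hy) with h | h
      · exact le_of_eq (congrArg key h.symm)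
      · exact hple y h
    have herase : (p :: rest).toFinset.erase p = rest.toFinset := by
      ext q
      simp only [Finset.mem_erase, List.mem_toFinset, List.mem_cons]
      constructor
      · rintro ⟨hq, hq' | hq'⟩
        · exact absurd hq' hq
        · exact hq'
      · intro hq
        exact ⟨fun h => hpnotin (h ▸ hq), Or.inr hq⟩
    rw [greedy, greedyF, dif_pos hne]
    simp only [hargmin, herase]
    by_cases hb : cost p ≤ budget
    · rw [if_pos hb, if_pos hb, ih hndrest hrest]
    · rw [if_neg hb, if_neg hb, ih hndrest hrest]

variable (A : V → Finset P) (tb : P ↪ ℕ) (cost : P → ℝ)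

/-- The real-valued priority key: cost per approver, ties broken by `tb`. -/
def realKey (p : P) : ℝ ×ₗ ℕ :=
  toLex ((cost p / ((approvers A p).card : ℝ), tb p))

lemma realKey_inj : Function.Injective (realKey A tb cost) :=
  lexKey_inj _ tb

lemma ratio_eq (hcost : ∀ p, 0 ≤ cost p) (happr : ∀ p, (approvers A p).Nonempty) (p : P) :
    ((approvers A p).card : ENNReal) / ENNReal.ofReal (cost p) =
      (ENNReal.ofReal (cost p / ((approvers A p).card : ℝ)))⁻¹ := by
  have hn : (0 : ℝ) < ((approvers A p).card : ℝ) := by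
    exact_mod_cast (happr p).card_pos
  rw [ENNReal.ofReal_div_of_pos hn, ENNReal.ofReal_natCast]
  rw [ENNReal.inv_div (Or.inl (by simp)) (Or.inl (by exact_mod_cast (happr p).card_pos.ne'))]

lemma avCostKey_agree (hcost : ∀ p, 0 ≤ cost p) (happr : ∀ p, (approvers A p).Nonempty)
    (p q : P) :
    avCostKey A tb cost p ≤ avCostKey A tb cost q ↔
      realKey A tb cost p ≤ realKey A tb cost q := by
  have hnn : ∀ r : P, 0 ≤ cost r / ((approvers A r).card : ℝ) := fun r =>
    div_nonneg (hcost r) (Nat.cast_nonneg _)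
  rw [avCostKey, avCostKey, realKey, realKey, Prod.Lex.le_iff, Prod.Lex.le_iff]
  simp only [ratio_eq A cost hcost happr, ofLex_toLex]
  constructor
  · rintro (h | ⟨h, h2⟩)
    · left
      rw [OrderDual.toDual_lt_toDual, ENNReal.inv_lt_inv,
        ENNReal.ofReal_lt_ofReal_iff_of_nonneg (hnn p)] at h
      exact h
    · right
      refine ⟨?_, h2⟩
      have := OrderDual.toDual_inj.mp h
      have := inv_inj.mp this
      exact (ENNReal.ofReal_eq_ofReal_iff (hnn p) (hnn q)).mp this
  · rintro (h | ⟨h, h2⟩)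
    · left
      rw [OrderDual.toDual_lt_toDual, ENNReal.inv_lt_inv,
        ENNReal.ofReal_lt_ofReal_iff_of_nonneg (hnn p)]
      exact h
    · right
      refine ⟨?_, h2⟩
      rw [OrderDual.toDual_inj]
      congr 1
      exact (ENNReal.ofReal_eq_ofReal_iff (hnn p) (hnn q)).mpr h

lemma phragTau_eq (happr : ∀ p, (approvers A p).Nonempty)
    {b : V → ℝ} {t : ℝ} {p : P} (hb : ∀ v ∈ approvers A p, b v = t) :
    phragTau A cost b p = cost p / ((approvers A p).card : ℝ) - t := by
  have hn : (0 : ℝ) < ((approvers A p).card : ℝ) := by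
    exact_mod_cast (happr p).card_pos
  have hsum : ∑ v ∈ approvers A p, b v = ((approvers A p).card : ℝ) * t := by
    rw [Finset.sum_congr rfl hb, Finset.sum_const, nsmul_eq_mul]
  rw [phragTau, hsum]
  field_simp

lemma phragmenAux_eq_greedyF (hplu : plurality A)
    (happr : ∀ p, (approvers A p).Nonempty) (R : Finset P) :
    ∀ (budget t : ℝ) (b : V → ℝ),
      (∀ q ∈ R, ∀ v ∈ approvers A q, b v = t) →
      phragmenAux A tb cost R budget b =
        greedyF cost (realKey A tb cost) (realKey_inj A tb cost) R budget := by
  induction R using Finset.strongInduction with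
  | _ R ih =>
    intro budget t b hinv
    rw [phragmenAux, greedyF]
    by_cases hR : R.Nonempty
    · rw [dif_pos hR, dif_pos hR]
      have keyeq : ∀ q ∈ R, toLex ((phragTau A cost b q, tb q) : ℝ × ℕ)
          = toLex ((cost q / ((approvers A q).card : ℝ) - t, tb q) : ℝ × ℕ) := by
        intro q hq
        rw [phragTau_eq A cost happr (hinv q hq)]
      have hp : argminBy (fun p => toLex ((phragTau A cost b p, tb p) : ℝ × ℕ))
            (lexKey_inj _ tb) R hR
          = argminBy (realKey A tb cost) (realKey_inj A tb cost) R hR := by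
        apply argminBy_congr
        intro x hx y hy
        rw [keyeq x hx, keyeq y hy, realKey, realKey, Prod.Lex.le_iff, Prod.Lex.le_iff]
        simp only [ofLex_toLex, sub_lt_sub_iff_right, sub_left_inj]
      set q := argminBy (realKey A tb cost) (realKey_inj A tb cost) R hR with hqdef
      have hqmem : q ∈ R := argminBy_mem _ _ _ _
      simp only [hp]
      have htau : phragTau A cost b q = cost q / ((approvers A q).card : ℝ) - t :=
        phragTau_eq A cost happr (hinv q hqmem)
      have hdisj : ∀ r ∈ R.erase q, ∀ v ∈ approvers A r, v ∉ approvers A q := by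
        intro r hr v hv hvq
        have hrq : r ≠ q := (Finset.mem_erase.mp hr).1
        have hr' : r ∈ A v := (Finset.mem_filter.mp hv).2
        have hq' : q ∈ A v := (Finset.mem_filter.mp hvq).2
        have hcard := hplu v
        rw [Finset.card_eq_one] at hcard
        obtain ⟨a, ha⟩ := hcard
        rw [ha, Finset.mem_singleton] at hr' hq'
        exact hrq (hr'.trans hq'.symm)
      by_cases hb : cost q ≤ budget
      · rw [if_pos hb, if_pos hb]
        congr 1
        apply ih _ (Finset.erase_ssubset hqmem) _ (t + phragTau A cost b q)
        intro r hr v hv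
        rw [if_neg (hdisj r hr v hv)]
        rw [hinv r (Finset.mem_of_mem_erase hr) v hv]
      · rw [if_neg hb, if_neg hb]
        apply ih _ (Finset.erase_ssubset hqmem) _ (t + phragTau A cost b q)
        intro r hr v hv
        rw [hinv r (Finset.mem_of_mem_erase hr) v hv]
    · rw [dif_neg hR, dif_neg hR]

lemma prioList_nodup {κ : Type} [LinearOrder κ] (key : P → κ)
    (hk : Function.Injective key) : (prioList key hk).Nodup := by
  unfold prioList
  letI : DecidableRel fun p q : P => key p ≤ key q :=
    fun a b => inferInstanceAs (Decidable (key a ≤ key b))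
  letI : IsTrans P fun p q => key p ≤ key q := ⟨fun _ _ _ h1 h2 => le_trans h1 h2⟩
  letI : Std.Antisymm fun p q : P => key p ≤ key q := ⟨fun _ _ h1 h2 => hk (le_antisymm h1 h2)⟩
  letI : Std.Total fun p q : P => key p ≤ key q := ⟨fun _ _ => le_total _ _⟩
  exact Finset.sort_nodup _ _

lemma prioList_sorted {κ : Type} [LinearOrder κ] (key : P → κ)
    (hk : Function.Injective key) :
    (prioList key hk).Pairwise (fun p q => key p ≤ key q) := by
  unfold prioList
  letI : DecidableRel fun p q : P => key p ≤ key q :=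
    fun a b => inferInstanceAs (Decidable (key a ≤ key b))
  letI : IsTrans P fun p q => key p ≤ key q := ⟨fun _ _ _ h1 h2 => le_trans h1 h2⟩
  letI : Std.Antisymm fun p q : P => key p ≤ key q := ⟨fun _ _ h1 h2 => hk (le_antisymm h1 h2)⟩
  letI : Std.Total fun p q : P => key p ≤ key q := ⟨fun _ _ => le_total _ _⟩
  exact Finset.pairwise_sort _ _

lemma prioList_toFinset {κ : Type} [LinearOrder κ] (key : P → κ)
    (hk : Function.Injective key) : (prioList key hk).toFinset = Finset.univ := by
  unfold prioList
  letI : DecidableRel fun p q : P => key p ≤ key q :=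
    fun a b => inferInstanceAs (Decidable (key a ≤ key b))
  letI : IsTrans P fun p q => key p ≤ key q := ⟨fun _ _ _ h1 h2 => le_trans h1 h2⟩
  letI : Std.Antisymm fun p q : P => key p ≤ key q := ⟨fun _ _ h1 h2 => hk (le_antisymm h1 h2)⟩
  letI : Std.Total fun p q : P => key p ≤ key q := ⟨fun _ _ => le_total _ _⟩
  exact Finset.sort_toFinset _ _

end Aux

end PB

/-- For plurality ballots, AV/Cost and Phragmén output the same set of
funded projects (for any fixed tie-breaking order). -/
theorem avCost_eq_phragmen_on_plurality
    {P V : Type} [Fintype P] [DecidableEq P] [Fintype V] [DecidableEq V]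
    (A : V → Finset P) (tb : P ↪ ℕ) (B : ℝ) (cost : P → ℝ)
    (hB : 0 < B) (hcost : ∀ p, 0 ≤ cost p)
    (hplu : PB.plurality A) (happr : ∀ p, (PB.approvers A p).Nonempty) :
    PB.avCost A tb B cost = PB.phragmen A tb B cost := by
  have hinj : Function.Injective (PB.avCostKey A tb cost) := PB.lexKey_inj _ tb
  show PB.greedy cost B (PB.prioList (PB.avCostKey A tb cost) hinj) = _
  rw [PB.phragmen,
    PB.greedy_eq_greedyF cost (PB.avCostKey A tb cost) (PB.lexKey_inj _ tb) _
      (PB.prioList_nodup _ _) (PB.prioList_sorted _ _) B,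
    PB.prioList_toFinset,
    PB.greedyF_congr cost (PB.avCostKey A tb cost) (PB.realKey A tb cost)
      (PB.lexKey_inj _ tb) (PB.realKey_inj A tb cost)
      (fun p q => PB.avCostKey_agree A tb cost hcost happr p q) Finset.univ B,
    PB.phragmenAux_eq_greedyF A tb cost hplu happr Finset.univ B 0 (fun _ => 0)
      (fun _ _ _ _ => rfl)]
end
end

section
/- For every PB game (P,V,B,d) with plurality ballots and every tie-breaking order, there exists a MES-Apr-Nash equilibrium; in particular, the strategy profile in which each project p_i reports max(d(p_i), B·|A(p_i)|/|V|) is a MES-Apr-Nash equilibrium. -/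
open scoped Classical

set_option linter.unusedSectionVars false
set_option linter.unusedVariables false

noncomputable section

section Aux

variable {P V : Type} [Fintype P] [DecidableEq P] [Fintype V] [DecidableEq V]

lemma mem_approvers_iff (A : V → Finset P) (p : P) (v : V) :
    v ∈ PB.approvers A p ↔ p ∈ A v := by
  simp [PB.approvers]

lemma plurality_unique (A : V → Finset P) (hplu : PB.plurality A) {v : V} {p q : P}
    (hp : p ∈ A v) (hq : q ∈ A v) : p = q := by
  obtain ⟨a, ha⟩ := Finset.card_eq_one.mp (hplu v)
  rw [ha, Finset.mem_singleton] at hp hq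
  rw [hp, hq]

lemma afford_char (A : V → Finset P) (c : P → ℝ) {m : ℝ} (hm : 0 < m) (b : V → ℝ) (p : P)
    (hap : (PB.approvers A p).Nonempty)
    (hb : ∀ v ∈ PB.approvers A p, b v = m) :
    (PB.affordSet A (fun bv α _ => min bv α) c b p).Nonempty ↔
      c p ≤ ((PB.approvers A p).card : ℝ) * m := by
  have hsum : ∀ α : ℝ, ∑ v ∈ PB.approvers A p, min (b v) α
      = ((PB.approvers A p).card : ℝ) * min m α := by
    intro α
    rw [Finset.sum_congr rfl (fun v hv => by rw [hb v hv]), Finset.sum_const, nsmul_eq_mul]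
  have hcard : (0:ℝ) < ((PB.approvers A p).card : ℝ) := by
    exact_mod_cast Finset.card_pos.mpr hap
  constructor
  · rintro ⟨α, hα⟩
    have h1 : ∑ v ∈ PB.approvers A p, min (b v) α = c p := hα
    rw [hsum] at h1
    nlinarith [min_le_left m α]
  · intro h
    refine ⟨c p / ((PB.approvers A p).card : ℝ), ?_⟩
    show ∑ v ∈ PB.approvers A p, min (b v) _ = c p
    rw [hsum]
    have hle : c p / ((PB.approvers A p).card : ℝ) ≤ m := by
      rw [div_le_iff₀ hcard]; nlinarith
    rw [min_eq_right hle, mul_comm, div_mul_cancel₀ _ (ne_of_gt hcard)]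

lemma mesAux_char (A : V → Finset P) (tb : P ↪ ℕ) (c : P → ℝ) {m : ℝ} (hm : 0 < m)
    (hplu : PB.plurality A) (happr : ∀ p, (PB.approvers A p).Nonempty)
    (R : Finset P) :
    ∀ b : V → ℝ, (∀ p ∈ R, ∀ v ∈ PB.approvers A p, b v = m) →
      ∀ p, (p ∈ PB.mesAux A tb (fun bv α _ => min bv α) c R b ↔
        (p ∈ R ∧ c p ≤ ((PB.approvers A p).card : ℝ) * m)) := by
  induction R using Finset.strongInduction with
  | _ R ih =>
    intro b hb p
    rw [PB.mesAux]
    have hFeq : (R.filter fun q => (PB.affordSet A (fun bv α _ => min bv α) c b q).Nonempty)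
        = R.filter fun q => c q ≤ ((PB.approvers A q).card : ℝ) * m := by
      apply Finset.filter_congr
      intro q hq
      exact afford_char A c hm b q (happr q) (hb q hq)
    by_cases hF : (R.filter fun q => (PB.affordSet A (fun bv α _ => min bv α) c b q).Nonempty).Nonempty
    · rw [dif_pos hF]
      set q := PB.argminBy
          (fun p => toLex ((sInf (PB.affordSet A (fun bv α _ => min bv α) c b p), tb p) : ℝ × ℕ))
          (PB.lexKey_inj _ tb) _ hF with hqdef
      have hqF : q ∈ R.filter fun q => (PB.affordSet A (fun bv α _ => min bv α) c b q).Nonempty :=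
        PB.argminBy_mem _ _ _ _
      have hqR : q ∈ R := (Finset.mem_filter.mp hqF).1
      have hqcost : c q ≤ ((PB.approvers A q).card : ℝ) * m := by
        rw [hFeq] at hqF
        exact (Finset.mem_filter.mp hqF).2
      have hinv : ∀ r ∈ R.erase q, ∀ v ∈ PB.approvers A r,
          (fun v => if v ∈ PB.approvers A q then
              b v - min (b v) (sInf (PB.affordSet A (fun bv α _ => min bv α) c b q))
            else b v) v = m := by
        intro r hr v hv
        have hrq : r ≠ q := Finset.ne_of_mem_erase hr
        have hvq : v ∉ PB.approvers A q := by
          intro hvq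
          exact hrq (plurality_unique A hplu ((mem_approvers_iff A r v).mp hv)
            ((mem_approvers_iff A q v).mp hvq))
        simp only [hvq, if_false]
        exact hb r (Finset.mem_of_mem_erase hr) v hv
      rw [Finset.mem_insert, ih (R.erase q) (Finset.erase_ssubset hqR) _ hinv p]
      constructor
      · rintro (rfl | ⟨hpe, hpc⟩)
        · exact ⟨hqR, hqcost⟩
        · exact ⟨Finset.mem_of_mem_erase hpe, hpc⟩
      · rintro ⟨hpR, hpc⟩
        by_cases hpq : p = q
        · exact Or.inl hpq
        · exact Or.inr ⟨Finset.mem_erase.mpr ⟨hpq, hpR⟩, hpc⟩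
    · rw [dif_neg hF]
      simp only [Finset.notMem_empty, false_iff]
      rintro ⟨hpR, hpc⟩
      apply hF
      refine ⟨p, Finset.mem_filter.mpr ⟨hpR, ?_⟩⟩
      exact (afford_char A c hm b p (happr p) (hb p hpR)).mpr hpc

end Aux

lemma mesApr_char {P V : Type} [Fintype P] [DecidableEq P] [Fintype V] [DecidableEq V]
    [Nonempty V]
    (A : V → Finset P) (tb : P ↪ ℕ) (B : ℝ) (hB : 0 < B)
    (hplu : PB.plurality A) (happr : ∀ p, (PB.approvers A p).Nonempty)
    (c : P → ℝ) (p : P) :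
    p ∈ PB.mesApr A tb B c ↔ c p ≤ B * ((PB.approvers A p).card : ℝ) / (Fintype.card V : ℝ) := by
  have hV : (0:ℝ) < (Fintype.card V : ℝ) := by
    exact_mod_cast Fintype.card_pos
  have hm : (0:ℝ) < B / (Fintype.card V : ℝ) := div_pos hB hV
  have := mesAux_char A tb c hm hplu happr Finset.univ
    (fun _ => B / (Fintype.card V : ℝ)) (fun _ _ _ _ => rfl) p
  rw [PB.mesApr, this]
  have : ((PB.approvers A p).card : ℝ) * (B / (Fintype.card V : ℝ))
      = B * ((PB.approvers A p).card : ℝ) / (Fintype.card V : ℝ) := by ring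
  rw [this]
  simp

theorem mesApr_NE_plurality'
    {P V : Type} [Fintype P] [DecidableEq P] [Fintype V] [DecidableEq V] [Nonempty V]
    (A : V → Finset P) (tb : P ↪ ℕ) (B : ℝ) (d : P → ℝ)
    (hB : 0 < B) (hplu : PB.plurality A)
    (happr : ∀ p, (PB.approvers A p).Nonempty)
    (hd0 : ∀ p, 0 ≤ d p) (hdB : ∀ p, d p ≤ B) :
    (∃ c : P → ℝ, PB.isNE (PB.mesApr A tb B) d c) ∧
    PB.isNE (PB.mesApr A tb B) d
      (fun p => max (d p) (B * ((PB.approvers A p).card : ℝ) / (Fintype.card V : ℝ))) := by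
  set t : P → ℝ := fun p => B * ((PB.approvers A p).card : ℝ) / (Fintype.card V : ℝ) with ht
  set c : P → ℝ := fun p => max (d p) (t p) with hc
  have hNE : PB.isNE (PB.mesApr A tb B) d c := by
    constructor
    · intro p; exact le_trans (hd0 p) (le_max_left _ _)
    · intro p x hx
      have hup : Function.update c p x p = x := Function.update_self p x c
      have hmem1 : p ∈ PB.mesApr A tb B (Function.update c p x) ↔ x ≤ t p := by
        rw [mesApr_char A tb B hB hplu happr, hup]
      have hmem2 : p ∈ PB.mesApr A tb B c ↔ d p ≤ t p := by
        rw [mesApr_char A tb B hB hplu happr]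
        simp only [hc, ht, max_le_iff, le_refl, and_true]
      rw [PB.payoff, PB.payoff, hup]
      by_cases h1 : p ∈ PB.mesApr A tb B (Function.update c p x)
      · rw [if_pos h1]
        have hxt : x ≤ t p := hmem1.mp h1
        by_cases h2 : d p ≤ t p
        · rw [if_pos (hmem2.mpr h2)]
          have : c p = t p := max_eq_right h2
          rw [this]
          linarith
        · rw [if_neg (fun h => h2 (hmem2.mp h))]
          push_neg at h2
          linarith
      · rw [if_neg h1]
        by_cases h2 : p ∈ PB.mesApr A tb B c
        · rw [if_pos h2]
          have : c p = t p := max_eq_right (hmem2.mp h2)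
          have hd := hmem2.mp h2
          rw [this]
          linarith
        · rw [if_neg h2]
  exact ⟨⟨c, hNE⟩, hNE⟩


/-- For plurality ballots, a MES-Apr-Nash equilibrium always exists;
in particular, the profile in which each project `p` reports
`max (d p) (B·|A(p)|/|V|)` is a MES-Apr-Nash equilibrium. -/
theorem mesApr_NE_plurality
    {P V : Type} [Fintype P] [DecidableEq P] [Fintype V] [DecidableEq V] [Nonempty V]
    (A : V → Finset P) (tb : P ↪ ℕ) (B : ℝ) (d : P → ℝ)
    (hB : 0 < B) (hplu : PB.plurality A)
    (happr : ∀ p, (PB.approvers A p).Nonempty)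
    (hd0 : ∀ p, 0 ≤ d p) (hdB : ∀ p, d p ≤ B) :
    (∃ c : P → ℝ, PB.isNE (PB.mesApr A tb B) d c) ∧
    PB.isNE (PB.mesApr A tb B) d
      (fun p => max (d p) (B * ((PB.approvers A p).card : ℝ) / (Fintype.card V : ℝ))) := by
  exact mesApr_NE_plurality' A tb B d hB hplu happr hd0 hdB
end
end

section
/- For every PB game (P,V,B,d) with party-list ballots and zero delivery costs (d ≡ 0), and every tie-breaking order, there exists a MES-Apr-Nash equilibrium; in particular, the strategy profile in which each project p reports c(p) = B·|A(p)|/(|V|·|party(p)|) is a MES-Apr-Nash equilibrium. -/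
open scoped Classical

set_option linter.unusedSectionVars false
set_option linter.unusedVariables false

noncomputable section

section NEProof

open PB

variable {P V : Type} [Fintype P] [DecidableEq P] [Fintype V] [DecidableEq V]

private lemma argmin_le {κ : Type} [LinearOrder κ] (key : P → κ)
    (hk : Function.Injective key) (R : Finset P) (hR : R.Nonempty) (r : P) (hr : r ∈ R) :
    key (PB.argminBy key hk R hR) ≤ key r := by
  letI : LinearOrder P := LinearOrder.lift' key hk
  exact Finset.min'_le R r hr

private lemma lex_fst_le {a b : ℝ} {m n : ℕ}
    (h : toLex ((a, m) : ℝ × ℕ) ≤ toLex ((b, n) : ℝ × ℕ)) : a ≤ b := by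
  rcases (Prod.Lex.le_iff).mp h with h' | ⟨h', _⟩
  · exact le_of_lt h'
  · exact le_of_eq h'

private lemma approvers_eq_of_mem {A : V → Finset P} (hpl : partyList A) {p q : P} {v : V}
    (hv : v ∈ approvers A p) (hv' : v ∈ approvers A q) :
    approvers A p = approvers A q := by
  simp only [approvers, Finset.mem_filter, Finset.mem_univ, true_and] at hv hv'
  ext w
  simp only [approvers, Finset.mem_filter, Finset.mem_univ, true_and]
  constructor
  · intro hw
    rcases hpl w v with he | hd
    · rw [he]; exact hv'
    · exact absurd hv (Finset.disjoint_left.mp hd hw)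
  · intro hw
    rcases hpl w v with he | hd
    · rw [he]; exact hv
    · exact absurd hv' (Finset.disjoint_left.mp hd hw)

private lemma mem_afford_iff {A : V → Finset P} {cost : P → ℝ} {b : V → ℝ} {q : P}
    {β : ℝ} (hb : ∀ v ∈ approvers A q, b v = β) (α : ℝ) :
    α ∈ affordSet A (fun bv α _ => min bv α) cost b q ↔
      ((approvers A q).card : ℝ) * min β α = cost q := by
  have hsum : ∑ v ∈ approvers A q, min (b v) α = ((approvers A q).card : ℝ) * min β α := by
    rw [Finset.sum_congr rfl fun v hv => by rw [hb v hv], Finset.sum_const, nsmul_eq_mul]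
  simp only [affordSet, Set.mem_setOf_eq]
  rw [hsum]

private lemma afford_nonempty_iff {A : V → Finset P} {cost : P → ℝ} {b : V → ℝ} {q : P}
    {β : ℝ} (hS : (approvers A q).Nonempty) (hb : ∀ v ∈ approvers A q, b v = β) :
    (affordSet A (fun bv α _ => min bv α) cost b q).Nonempty ↔
      cost q ≤ ((approvers A q).card : ℝ) * β := by
  have hcard : (0:ℝ) < (approvers A q).card := by exact_mod_cast Finset.card_pos.mpr hS
  constructor
  · rintro ⟨α, hα⟩
    rw [mem_afford_iff hb] at hα
    calc cost q = ((approvers A q).card : ℝ) * min β α := hα.symm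
      _ ≤ ((approvers A q).card : ℝ) * β :=
        mul_le_mul_of_nonneg_left (min_le_left _ _) (le_of_lt hcard)
  · intro h
    refine ⟨cost q / ((approvers A q).card : ℝ), ?_⟩
    rw [mem_afford_iff hb]
    have hle : cost q / ((approvers A q).card : ℝ) ≤ β := by
      rw [div_le_iff₀ hcard, mul_comm]; exact h
    rw [min_eq_right hle]
    field_simp

private lemma afford_sInf {A : V → Finset P} {cost : P → ℝ} {b : V → ℝ} {q : P}
    {β : ℝ} (hS : (approvers A q).Nonempty) (hb : ∀ v ∈ approvers A q, b v = β)
    (h : cost q ≤ ((approvers A q).card : ℝ) * β) :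
    sInf (affordSet A (fun bv α _ => min bv α) cost b q)
      = cost q / ((approvers A q).card : ℝ) := by
  have hcard : (0:ℝ) < (approvers A q).card := by exact_mod_cast Finset.card_pos.mpr hS
  have hle : cost q / ((approvers A q).card : ℝ) ≤ β := by
    rw [div_le_iff₀ hcard, mul_comm]; exact h
  refine IsLeast.csInf_eq ⟨?_, ?_⟩
  · rw [mem_afford_iff hb, min_eq_right hle]
    field_simp
  · intro α hα
    rw [mem_afford_iff hb] at hα
    have hmin : min β α = cost q / ((approvers A q).card : ℝ) := by
      rw [eq_div_iff (ne_of_gt hcard), mul_comm]; exact hα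
    calc cost q / ((approvers A q).card : ℝ) = min β α := hmin.symm
      _ ≤ α := min_le_right _ _

private lemma mesAux_subset (A : V → Finset P) (tb : P ↪ ℕ) (contrib : ℝ → ℝ → ℝ → ℝ)
    (cost : P → ℝ) :
    ∀ (n : ℕ) (R : Finset P) (b : V → ℝ), R.card ≤ n →
      mesAux A tb contrib cost R b ⊆ R := by
  intro n
  induction n with
  | zero =>
    intro R b h
    have hR : R = ∅ := Finset.card_eq_zero.mp (Nat.le_zero.mp h)
    subst hR
    have heq := PB.mesAux.eq_def (A := A) (tb := tb) (contrib := contrib) (cost := cost) ∅ b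
    simp only [Finset.filter_empty, Finset.not_nonempty_empty, dite_false] at heq
    rw [heq]
  | succ n ih =>
    intro R b h
    have heq := PB.mesAux.eq_def (A := A) (tb := tb) (contrib := contrib) (cost := cost) R b
    simp only [] at heq
    split_ifs at heq with hF
    · rw [heq]
      suffices H : ∀ q ∈ R.filter (fun r => (affordSet A contrib cost b r).Nonempty),
          ∀ b' : V → ℝ, insert q (mesAux A tb contrib cost (R.erase q) b') ⊆ R by
        exact H _ (PB.argminBy_mem _ _ _ _) _
      intro q hq b' r hr
      have hqR : q ∈ R := Finset.mem_of_mem_filter q hq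
      rcases Finset.mem_insert.mp hr with rfl | hr'
      · exact hqR
      · exact Finset.mem_of_mem_erase (ih (R.erase q) b'
          (by have := Finset.card_erase_of_mem hqR; omega) hr')
    · rw [heq]
      exact Finset.empty_subset R

private lemma mes_not_funded (A : V → Finset P) (tb : P ↪ ℕ) (hpl : partyList A)
    (cost : P → ℝ) (p : P) (hS : (approvers A p).Nonempty)
    (t : ℝ) (ht : 0 < t)
    (hparty : ∀ q, approvers A q = approvers A p → q ≠ p → cost q = t)
    (hx : t < cost p) :
    ∀ (n : ℕ) (R : Finset P) (b : V → ℝ), R.card ≤ n → p ∈ R →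
      ∀ β : ℝ, 0 ≤ β → (∀ v ∈ approvers A p, b v = β) →
      ((approvers A p).card : ℝ) * β
        = ((R.filter fun r => approvers A r = approvers A p).card : ℝ) * t →
      p ∉ mesAux A tb (fun bv α _ => min bv α) cost R b := by
  have hcard : (0:ℝ) < (approvers A p).card := by exact_mod_cast Finset.card_pos.mpr hS
  have hcancel : ∀ s : ℝ, ((approvers A p).card : ℝ) * (s / ((approvers A p).card : ℝ)) = s := by
    intro s; field_simp
  intro n
  induction n with
  | zero =>
    intro R b h hpR
    exact absurd (Finset.card_pos.mpr ⟨p, hpR⟩) (by omega)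
  | succ n ih =>
    intro R b hRcard hpR β hβ hb hsum
    have heq := PB.mesAux.eq_def (A := A) (tb := tb)
      (contrib := fun bv α _ => min bv α) (cost := cost) R b
    simp only [] at heq
    split_ifs at heq with hF
    swap
    · rw [heq]; exact Finset.notMem_empty p
    rw [heq]
    suffices H : ∀ q ∈ R.filter (fun r =>
          (affordSet A (fun bv α _ => min bv α) cost b r).Nonempty),
        (∀ r ∈ R.filter (fun r =>
            (affordSet A (fun bv α _ => min bv α) cost b r).Nonempty),
          (toLex ((sInf (affordSet A (fun bv α _ => min bv α) cost b q), tb q) : ℝ × ℕ))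
            ≤ toLex ((sInf (affordSet A (fun bv α _ => min bv α) cost b r), tb r) : ℝ × ℕ)) →
        p ∉ insert q (mesAux A tb (fun bv α _ => min bv α) cost (R.erase q)
          (fun v => if v ∈ approvers A q then
              b v - min (b v) (sInf (affordSet A (fun bv α _ => min bv α) cost b q))
            else b v)) by
      exact H _ (PB.argminBy_mem _ _ _ _)
        (fun r hr => argmin_le
          (fun s => toLex ((sInf (affordSet A (fun bv α _ => min bv α) cost b s), tb s) : ℝ × ℕ))
          (PB.lexKey_inj _ tb) _ hF r hr)
    intro q hqF hqmin hmem
    have hqR : q ∈ R := Finset.mem_of_mem_filter q hqF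
    have hqaff : (affordSet A (fun bv α _ => min bv α) cost b q).Nonempty :=
      (Finset.mem_filter.mp hqF).2
    rcases Finset.mem_insert.mp hmem with rfl | hmem'
    · -- p itself got selected: derive a contradiction
      have h1 : cost p ≤ ((approvers A p).card : ℝ) * β :=
        (afford_nonempty_iff hS hb).mp hqaff
      rw [hsum] at h1
      have hpfil : p ∈ R.filter fun r => approvers A r = approvers A p :=
        Finset.mem_filter.mpr ⟨hpR, rfl⟩
      have hk1 : 1 ≤ (R.filter fun r => approvers A r = approvers A p).card :=
        Finset.card_pos.mpr ⟨p, hpfil⟩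
      by_cases hk2 : 2 ≤ (R.filter fun r => approvers A r = approvers A p).card
      · obtain ⟨q', hq'fil, hq'ne⟩ :=
          Finset.exists_mem_ne
            (s := R.filter fun r => approvers A r = approvers A p) (by omega) p
        have hq'R : q' ∈ R := (Finset.mem_filter.mp hq'fil).1
        have hq'cls : approvers A q' = approvers A p := (Finset.mem_filter.mp hq'fil).2
        have hcost' : cost q' = t := hparty q' hq'cls hq'ne
        have hb' : ∀ v ∈ approvers A q', b v = β := fun v hv => hb v (hq'cls ▸ hv)
        have hS' : (approvers A q').Nonempty := by rw [hq'cls]; exact hS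
        have hle' : cost q' ≤ ((approvers A q').card : ℝ) * β := by
          rw [hcost', hq'cls, hsum]
          have : (1:ℝ) ≤ ((R.filter fun r => approvers A r = approvers A p).card : ℝ) := by
            exact_mod_cast hk1
          nlinarith
        have haff' := (afford_nonempty_iff hS' hb').mpr hle'
        have hq'F : q' ∈ R.filter (fun r =>
            (affordSet A (fun bv α _ => min bv α) cost b r).Nonempty) :=
          Finset.mem_filter.mpr ⟨hq'R, haff'⟩
        have hsi' : sInf (affordSet A (fun bv α _ => min bv α) cost b q')
            = t / ((approvers A p).card : ℝ) := by
          rw [afford_sInf hS' hb' hle', hcost', hq'cls]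
        have hsip : sInf (affordSet A (fun bv α _ => min bv α) cost b p)
            = cost p / ((approvers A p).card : ℝ) :=
          afford_sInf hS hb (by rw [hsum]; exact h1)
        have hlex := lex_fst_le (hqmin q' hq'F)
        rw [hsip, hsi'] at hlex
        have h2 := mul_le_mul_of_nonneg_right hlex (le_of_lt hcard)
        rw [div_mul_cancel₀ _ (ne_of_gt hcard), div_mul_cancel₀ _ (ne_of_gt hcard)] at h2
        linarith
      · have hkeq : (R.filter fun r => approvers A r = approvers A p).card = 1 := by omega
        rw [hkeq] at h1
        simp only [Nat.cast_one, one_mul] at h1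
        linarith
    · -- some project q was selected, p survives to the recursive call
      by_cases hqp : q = p
      · subst hqp
        exact absurd (mesAux_subset A tb _ cost (R.erase q).card _ _ le_rfl hmem')
          (Finset.notMem_erase q R)
      · by_cases hcls : approvers A q = approvers A p
        · -- same party
          have hcq : cost q = t := hparty q hcls hqp
          have hb'' : ∀ v ∈ approvers A q, b v = β := fun v hv => hb v (hcls ▸ hv)
          have hS'' : (approvers A q).Nonempty := by rw [hcls]; exact hS
          have hqle : cost q ≤ ((approvers A q).card : ℝ) * β :=
            (afford_nonempty_iff hS'' hb'').mp hqaff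
          have hqle' : t ≤ ((approvers A p).card : ℝ) * β := by
            rw [← hcq, ← hcls]; exact hqle
          have hsiq : sInf (affordSet A (fun bv α _ => min bv α) cost b q)
              = t / ((approvers A p).card : ℝ) := by
            rw [afford_sInf hS'' hb'' hqle, hcq, hcls]
          have htle : t / ((approvers A p).card : ℝ) ≤ β := by
            rw [div_le_iff₀ hcard, mul_comm]; exact hqle'
          have hfil : q ∈ R.filter fun r => approvers A r = approvers A p :=
            Finset.mem_filter.mpr ⟨hqR, hcls⟩
          have hknat : 1 ≤ (R.filter fun r => approvers A r = approvers A p).card :=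
            Finset.card_pos.mpr ⟨q, hfil⟩
          have hlt : (R.erase q).card ≤ n := by
            have := Finset.card_erase_of_mem hqR
            have := Finset.card_pos.mpr ⟨q, hqR⟩
            omega
          refine ih (R.erase q) _ hlt
            (Finset.mem_erase.mpr ⟨Ne.symm hqp, hpR⟩)
            (β - t / ((approvers A p).card : ℝ)) (by linarith) ?_ ?_ hmem'
          · intro v hv
            have hvq : v ∈ approvers A q := hcls.symm ▸ hv
            rw [if_pos hvq, hb v hv, hsiq, min_eq_right htle]
          · rw [Finset.filter_erase, Finset.card_erase_of_mem hfil, Nat.cast_sub hknat]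
            rw [mul_sub, hcancel t, hsum]
            push_cast
            ring
        · -- disjoint party
          have hdis : ∀ v ∈ approvers A p, v ∉ approvers A q :=
            fun v hv hv' => hcls (approvers_eq_of_mem hpl hv' hv)
          have hlt : (R.erase q).card ≤ n := by
            have := Finset.card_erase_of_mem hqR
            have := Finset.card_pos.mpr ⟨q, hqR⟩
            omega
          refine ih (R.erase q) _ hlt
            (Finset.mem_erase.mpr ⟨Ne.symm hqp, hpR⟩) β hβ ?_ ?_ hmem'
          · intro v hv
            rw [if_neg (hdis v hv)]
            exact hb v hv
          · have hfe : (R.erase q).filter (fun r => approvers A r = approvers A p)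
                = R.filter fun r => approvers A r = approvers A p := by
              rw [Finset.filter_erase]
              apply Finset.erase_eq_of_notMem
              simp only [Finset.mem_filter, not_and]
              intro _ h'
              exact absurd h' hcls
            rw [hfe]
            exact hsum

private lemma mes_all_funded (A : V → Finset P) (tb : P ↪ ℕ) (hpl : partyList A)
    (cost : P → ℝ) (hcpos : ∀ q, 0 < cost q)
    (happr : ∀ q : P, (approvers A q).Nonempty)
    (hcc : ∀ q r : P, approvers A q = approvers A r → cost q = cost r) :
    ∀ (n : ℕ) (R : Finset P) (b : V → ℝ), R.card ≤ n →
      (∀ q ∈ R, ∃ β : ℝ, 0 ≤ β ∧ (∀ v ∈ approvers A q, b v = β) ∧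
        ((approvers A q).card : ℝ) * β
          = ((R.filter fun r => approvers A r = approvers A q).card : ℝ) * cost q) →
      R ⊆ mesAux A tb (fun bv α _ => min bv α) cost R b := by
  intro n
  induction n with
  | zero =>
    intro R b h _
    have hR : R = ∅ := Finset.card_eq_zero.mp (Nat.le_zero.mp h)
    subst hR
    exact Finset.empty_subset _
  | succ n ih =>
    intro R b hR hinv
    have heq := PB.mesAux.eq_def (A := A) (tb := tb)
      (contrib := fun bv α _ => min bv α) (cost := cost) R b
    simp only [] at heq
    split_ifs at heq with hF
    · rw [heq]
      suffices H : ∀ q ∈ R.filter (fun r =>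
            (affordSet A (fun bv α _ => min bv α) cost b r).Nonempty),
          R ⊆ insert q (mesAux A tb (fun bv α _ => min bv α) cost (R.erase q)
            (fun v => if v ∈ approvers A q then
                b v - min (b v) (sInf (affordSet A (fun bv α _ => min bv α) cost b q))
              else b v)) by
        exact H _ (PB.argminBy_mem _ _ _ _)
      intro q hqF
      have hqR : q ∈ R := Finset.mem_of_mem_filter q hqF
      have hqaff : (affordSet A (fun bv α _ => min bv α) cost b q).Nonempty :=
        (Finset.mem_filter.mp hqF).2
      obtain ⟨βq, hβq, hbq, hsumq⟩ := hinv q hqR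
      have hcardq : (0:ℝ) < (approvers A q).card := by
        exact_mod_cast Finset.card_pos.mpr (happr q)
      have hqle : cost q ≤ ((approvers A q).card : ℝ) * βq :=
        (afford_nonempty_iff (happr q) hbq).mp hqaff
      have hsiq : sInf (affordSet A (fun bv α _ => min bv α) cost b q)
          = cost q / ((approvers A q).card : ℝ) := afford_sInf (happr q) hbq hqle
      have hdivle : cost q / ((approvers A q).card : ℝ) ≤ βq := by
        rw [div_le_iff₀ hcardq, mul_comm]; exact hqle
      intro r hrR
      rcases eq_or_ne r q with rfl | hrq
      · exact Finset.mem_insert_self r _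
      · apply Finset.mem_insert_of_mem
        have hlt : (R.erase q).card ≤ n := by
          have := Finset.card_erase_of_mem hqR
          have := Finset.card_pos.mpr ⟨q, hqR⟩
          omega
        refine ih (R.erase q) _ hlt ?_
          (Finset.mem_erase.mpr ⟨hrq, hrR⟩)
        intro r' hr'
        have hr'R : r' ∈ R := Finset.mem_of_mem_erase hr'
        obtain ⟨β', hβ', hb', hsum'⟩ := hinv r' hr'R
        by_cases hcls : approvers A r' = approvers A q
        · obtain ⟨v0, hv0⟩ := happr r'
          have hββ : β' = βq := by
            rw [← hb' v0 hv0, hbq v0 (hcls ▸ hv0)]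
          have hcq : cost r' = cost q := hcc r' q hcls
          refine ⟨βq - cost q / ((approvers A q).card : ℝ), by linarith, ?_, ?_⟩
          · intro v hv
            have hvq : v ∈ approvers A q := hcls ▸ hv
            rw [if_pos hvq, hb' v hv, hββ, hsiq, min_eq_right hdivle]
          · have hqfil : q ∈ R.filter fun r => approvers A r = approvers A r' :=
              Finset.mem_filter.mpr ⟨hqR, hcls.symm⟩
            have hk1 : 1 ≤ (R.filter fun r => approvers A r = approvers A r').card :=
              Finset.card_pos.mpr ⟨q, hqfil⟩
            have hcA : ((approvers A r').card : ℝ) = ((approvers A q).card : ℝ) := by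
              rw [hcls]
            have hexp : ((approvers A q).card : ℝ) * (cost q / ((approvers A q).card : ℝ))
                = cost q := by field_simp
            rw [Finset.filter_erase, Finset.card_erase_of_mem hqfil, Nat.cast_sub hk1]
            rw [hcA, hcq, mul_sub, hexp]
            rw [hcA, hββ, hcq] at hsum'
            rw [hsum']
            push_cast
            ring
        · have hdis : ∀ v ∈ approvers A r', v ∉ approvers A q :=
            fun v hv hv' => hcls (approvers_eq_of_mem hpl hv hv')
          refine ⟨β', hβ', ?_, ?_⟩
          · intro v hv
            rw [if_neg (hdis v hv)]
            exact hb' v hv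
          · have hfe : (R.erase q).filter (fun r => approvers A r = approvers A r')
                = R.filter fun r => approvers A r = approvers A r' := by
              rw [Finset.filter_erase]
              apply Finset.erase_eq_of_notMem
              simp only [Finset.mem_filter, not_and]
              intro _ h'
              exact hcls h'.symm
            rw [hfe]
            exact hsum'
    · rcases R.eq_empty_or_nonempty with rfl | ⟨q, hq⟩
      · exact Finset.empty_subset _
      · exfalso
        obtain ⟨βq, hβq, hbq, hsumq⟩ := hinv q hq
        have hqfil : q ∈ R.filter fun r => approvers A r = approvers A q :=
          Finset.mem_filter.mpr ⟨hq, rfl⟩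
        have hk1 : (1:ℝ) ≤ ((R.filter fun r => approvers A r = approvers A q).card : ℝ) := by
          exact_mod_cast Finset.card_pos.mpr ⟨q, hqfil⟩
        have hle : cost q ≤ ((approvers A q).card : ℝ) * βq := by
          rw [hsumq]
          nlinarith [hcpos q]
        exact hF ⟨q, Finset.mem_filter.mpr
          ⟨hq, (afford_nonempty_iff (happr q) hbq).mpr hle⟩⟩

end NEProof

/-- For party-list ballots and zero delivery costs, a MES-Apr-Nash
equilibrium always exists; in particular, the profile in which each project `p`
reports `B·|A(p)| / (|V|·|party(p)|)` is a MES-Apr-Nash equilibrium. -/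
theorem mesApr_NE_partyList_zero_delivery
    {P V : Type} [Fintype P] [DecidableEq P] [Fintype V] [DecidableEq V] [Nonempty V]
    (A : V → Finset P) (tb : P ↪ ℕ) (B : ℝ)
    (hB : 0 < B) (hpl : PB.partyList A)
    (hballots : ∀ v, (A v).Nonempty)
    (happr : ∀ p, (PB.approvers A p).Nonempty) :
    (∃ c : P → ℝ, PB.isNE (PB.mesApr A tb B) (fun _ => 0) c) ∧
    PB.isNE (PB.mesApr A tb B) (fun _ => 0)
      (fun p => B * ((PB.approvers A p).card : ℝ) /
        ((Fintype.card V : ℝ) * ((PB.party A p).card : ℝ))) := by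
  classical
  set c : P → ℝ := fun p => B * ((PB.approvers A p).card : ℝ) /
      ((Fintype.card V : ℝ) * ((PB.party A p).card : ℝ)) with hc
  suffices hNE : PB.isNE (PB.mesApr A tb B) (fun _ => 0) c from ⟨⟨c, hNE⟩, hNE⟩
  have hnpos : (0:ℝ) < (Fintype.card V : ℝ) := by exact_mod_cast Fintype.card_pos
  have hparty_mem : ∀ p : P, p ∈ PB.party A p := fun p =>
    Finset.mem_filter.mpr ⟨Finset.mem_univ p, rfl⟩
  have hmpos : ∀ p : P, (0:ℝ) < ((PB.party A p).card : ℝ) := fun p => by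
    exact_mod_cast Finset.card_pos.mpr ⟨p, hparty_mem p⟩
  have hSpos : ∀ p : P, (0:ℝ) < ((PB.approvers A p).card : ℝ) := fun p => by
    exact_mod_cast Finset.card_pos.mpr (happr p)
  have hparty_eq : ∀ p q : P, PB.approvers A q = PB.approvers A p →
      PB.party A q = PB.party A p := by
    intro p q h
    ext r
    simp [PB.party, h]
  have hcc : ∀ p q : P, PB.approvers A q = PB.approvers A p → c q = c p := by
    intro p q h
    simp only [hc]
    rw [h, hparty_eq p q h]
  have hcpos : ∀ p, 0 < c p := fun p => by
    simp only [hc]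
    exact div_pos (mul_pos hB (hSpos p)) (mul_pos hnpos (hmpos p))
  have hfilparty : ∀ p : P,
      (Finset.univ.filter fun r => PB.approvers A r = PB.approvers A p) = PB.party A p :=
    fun p => rfl
  have hinit : ∀ p : P, ((PB.approvers A p).card : ℝ) * (B / (Fintype.card V : ℝ))
      = (((Finset.univ.filter fun r =>
          PB.approvers A r = PB.approvers A p)).card : ℝ) * c p := by
    intro p
    rw [hfilparty p]
    simp only [hc]
    have h1 : ((Fintype.card V : ℝ)) ≠ 0 := ne_of_gt hnpos
    have h2 : (((PB.party A p).card : ℝ)) ≠ 0 := ne_of_gt (hmpos p)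
    field_simp
  constructor
  · exact fun p => le_of_lt (hcpos p)
  · intro p x hx
    have hfund : p ∈ PB.mesApr A tb B c := by
      show p ∈ PB.mesAux A tb (fun bv α _ => min bv α) c Finset.univ
        (fun _ => B / (Fintype.card V : ℝ))
      refine mes_all_funded A tb hpl c hcpos happr (fun q r h => hcc r q h)
        Finset.univ.card Finset.univ (fun _ => B / (Fintype.card V : ℝ)) le_rfl ?_
        (Finset.mem_univ p)
      intro q _
      exact ⟨B / (Fintype.card V : ℝ), by positivity, fun v _ => rfl, hinit q⟩
    have hpay : PB.payoff (fun _ => 0) c (PB.mesApr A tb B c) p = c p := by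
      simp [PB.payoff, hfund]
    rw [hpay]
    by_cases hxc : x ≤ c p
    · unfold PB.payoff
      split_ifs with h
      · simp only [Function.update_self]
        linarith
      · linarith [hcpos p]
    · push_neg at hxc
      have hnot : p ∉ PB.mesApr A tb B (Function.update c p x) := by
        show p ∉ PB.mesAux A tb (fun bv α _ => min bv α) (Function.update c p x) Finset.univ
          (fun _ => B / (Fintype.card V : ℝ))
        refine mes_not_funded A tb hpl (Function.update c p x) p (happr p) (c p) (hcpos p)
          ?_ ?_ Finset.univ.card Finset.univ _ le_rfl (Finset.mem_univ p)
          (B / (Fintype.card V : ℝ)) (by positivity) (fun v _ => rfl) ?_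
        · intro q hq hqp
          rw [Function.update_of_ne hqp]
          exact hcc p q hq
        · rw [Function.update_self]
          exact hxc
        · exact hinit p
      unfold PB.payoff
      rw [if_neg hnot]
      linarith [hcpos p]
end
end
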